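/- Let char(k) ≠ 2 and f ∈ k[X] of degree 2g+2 with non-square leading coefficient, g ≥ 1. Define K = k(X)[Y]/(Y² - f), a quadratic extension of Q = k(X), and let O = k[X][Y]/(Y² - f) ⊂ K. Then for every x ∈ K there exists y ∈ O with deg(N_{K/Q}(x - y)) ≤ 2g, where N_{K/Q}(a + bY) = a² - f b² and deg is the extended polynomial degree on k(X). -/

import Mathlib

open Polynomial RatFunc

lemma frac_part {k : Type} [Field k] (q : RatFunc k) :
    ∃ c : Polynomial k, q - algebraMap (Polynomial k) (RatFunc k) c = 0 ∨
      (q - algebraMap (Polynomial k) (RatFunc k) c).intDegree < 0 := by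
  refine ⟨q.num / q.denom, ?_⟩
  have hd := q.monic_denom
  have hdvd : q.num %ₘ q.denom = q.num - q.denom * (q.num / q.denom) := by
    rw [Polynomial.modByMonic_eq_sub_mul_div, Polynomial.divByMonic_eq_div _ hd]
  have hden0 : (algebraMap (Polynomial k) (RatFunc k)) q.denom ≠ 0 := by
    simpa using q.denom_ne_zero
  have hq : q * algebraMap (Polynomial k) (RatFunc k) q.denom
      = algebraMap (Polynomial k) (RatFunc k) q.num := by
    exact (eq_div_iff hden0).mp q.num_div_denom.symm
  have key : q - algebraMap (Polynomial k) (RatFunc k) (q.num / q.denom)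
      = algebraMap (Polynomial k) (RatFunc k) (q.num %ₘ q.denom)
        / algebraMap (Polynomial k) (RatFunc k) q.denom := by
    rw [hdvd, eq_div_iff hden0, sub_mul, hq, map_sub, map_mul]
    ring
  by_cases hr : q.num %ₘ q.denom = 0
  · left; rw [key, hr]; simp
  · right
    rw [key]
    have hrn : (algebraMap (Polynomial k) (RatFunc k)) (q.num %ₘ q.denom) ≠ 0 := by
      simpa using hr
    have hinv : ((algebraMap (Polynomial k) (RatFunc k)) q.denom)⁻¹ ≠ 0 := inv_ne_zero hden0
    have h1 : RatFunc.intDegree ((algebraMap (Polynomial k) (RatFunc k)) q.denom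
        * ((algebraMap (Polynomial k) (RatFunc k)) q.denom)⁻¹) = 0 := by
      rw [mul_inv_cancel₀ hden0, RatFunc.intDegree_one]
    rw [RatFunc.intDegree_mul hden0 hinv, RatFunc.intDegree_polynomial] at h1
    rw [div_eq_mul_inv, RatFunc.intDegree_mul hrn hinv, RatFunc.intDegree_polynomial]
    have hlt : (q.num %ₘ q.denom).natDegree < q.denom.natDegree := by
      refine Polynomial.natDegree_modByMonic_lt q.num hd ?_
      intro h
      rw [h, Polynomial.modByMonic_one] at hr
      exact hr rfl
    omega

/-- In the quadratic extension `K = k(X)(√f)` with `f` of degree `2g+2` and non-square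
leading coefficient, every element of `K` is at norm-degree distance at most `2g`
from the ring `O = k[X][√f]`. -/
theorem stmt4 (k : Type) [Field k] (hchar : ringChar k ≠ 2) (g : ℕ) (hg : 1 ≤ g)
    (f : Polynomial k) (hf : f.natDegree = 2 * g + 2)
    (hlead : ¬ ∃ c : k, c ^ 2 = f.leadingCoeff)
    (K : Type) [Field K] [Algebra (RatFunc k) K]
    (Y : K)
    (hY : Y ^ 2 = algebraMap (RatFunc k) K (algebraMap (Polynomial k) (RatFunc k) f))
    (hrep : ∀ z : K, ∃! ab : RatFunc k × RatFunc k,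
        z = algebraMap (RatFunc k) K ab.1 + algebraMap (RatFunc k) K ab.2 * Y)
    (hnorm : ∀ a b : RatFunc k,
        Algebra.norm (RatFunc k)
            (algebraMap (RatFunc k) K a + algebraMap (RatFunc k) K b * Y)
          = a ^ 2 - (algebraMap (Polynomial k) (RatFunc k) f) * b ^ 2) :
    ∀ x : K, ∃ c d : Polynomial k,
      x = algebraMap (RatFunc k) K (algebraMap (Polynomial k) (RatFunc k) c)
            + algebraMap (RatFunc k) K (algebraMap (Polynomial k) (RatFunc k) d) * Y ∨
      (Algebra.norm (RatFunc k)
          (x - (algebraMap (RatFunc k) K (algebraMap (Polynomial k) (RatFunc k) c)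
            + algebraMap (RatFunc k) K (algebraMap (Polynomial k) (RatFunc k) d) * Y))).intDegree
        ≤ 2 * (g : ℤ) := by
  intro x
  obtain ⟨⟨a, b⟩, hab, -⟩ := hrep x
  obtain ⟨c, hc⟩ := frac_part a
  obtain ⟨d, hd⟩ := frac_part b
  refine ⟨c, d, ?_⟩
  set r := a - algebraMap (Polynomial k) (RatFunc k) c with hr
  set s := b - algebraMap (Polynomial k) (RatFunc k) d with hs
  have hdiff : x - (algebraMap (RatFunc k) K (algebraMap (Polynomial k) (RatFunc k) c)
      + algebraMap (RatFunc k) K (algebraMap (Polynomial k) (RatFunc k) d) * Y)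
      = algebraMap (RatFunc k) K r + algebraMap (RatFunc k) K s * Y := by
    rw [hab]; simp only [hr, hs, map_sub]; ring
  have hF : (algebraMap (Polynomial k) (RatFunc k) f) ≠ 0 := by
    intro h
    rw [FaithfulSMul.algebraMap_eq_zero_iff] at h
    rw [h] at hf; simp at hf
  have hFdeg : (algebraMap (Polynomial k) (RatFunc k) f).intDegree = 2 * (g : ℤ) + 2 := by
    rw [RatFunc.intDegree_polynomial, hf]; push_cast; ring
  by_cases hr0 : r = 0
  · by_cases hs0 : s = 0
    · left
      have : x - (algebraMap (RatFunc k) K (algebraMap (Polynomial k) (RatFunc k) c)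
          + algebraMap (RatFunc k) K (algebraMap (Polynomial k) (RatFunc k) d) * Y) = 0 := by
        rw [hdiff, hr0, hs0]; simp
      linear_combination (norm := ring_nf) this
    · -- r = 0, s ≠ 0
      right
      rw [hdiff, hnorm, hr0]
      have hs2 : s ^ 2 ≠ 0 := pow_ne_zero 2 hs0
      have : (0 ^ 2 - algebraMap (Polynomial k) (RatFunc k) f * s ^ 2 : RatFunc k)
          = -(algebraMap (Polynomial k) (RatFunc k) f * s ^ 2) := by ring
      rw [this, RatFunc.intDegree_neg, RatFunc.intDegree_mul hF hs2, pow_two,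
        RatFunc.intDegree_mul hs0 hs0, hFdeg]
      have hslt : s.intDegree < 0 := by rcases hd with h | h; exact absurd h hs0; exact h
      omega
  · right
    rw [hdiff, hnorm]
    have hrlt : r.intDegree < 0 := by rcases hc with h | h; exact absurd h hr0; exact h
    have hr2 : r ^ 2 ≠ 0 := pow_ne_zero 2 hr0
    have hr2deg : (r ^ 2).intDegree ≤ 2 * (g : ℤ) := by
      rw [pow_two, RatFunc.intDegree_mul hr0 hr0]; omega
    by_cases hs0 : s = 0
    · rw [hs0]
      have : (r ^ 2 - algebraMap (Polynomial k) (RatFunc k) f * 0 ^ 2 : RatFunc k) = r ^ 2 := by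
        ring
      rw [this]; exact hr2deg
    · have hslt : s.intDegree < 0 := by rcases hd with h | h; exact absurd h hs0; exact h
      have hs2 : s ^ 2 ≠ 0 := pow_ne_zero 2 hs0
      have hy0 : -(algebraMap (Polynomial k) (RatFunc k) f * s ^ 2) ≠ 0 := by
        simp [hF, hs0]
      have hydeg : (-(algebraMap (Polynomial k) (RatFunc k) f * s ^ 2)).intDegree
          ≤ 2 * (g : ℤ) := by
        rw [RatFunc.intDegree_neg, RatFunc.intDegree_mul hF hs2, pow_two,
          RatFunc.intDegree_mul hs0 hs0, hFdeg]
        omega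
      by_cases hsum : (r ^ 2 - algebraMap (Polynomial k) (RatFunc k) f * s ^ 2 : RatFunc k) = 0
      · rw [hsum, RatFunc.intDegree_zero]; positivity
      · have heq : (r ^ 2 - algebraMap (Polynomial k) (RatFunc k) f * s ^ 2 : RatFunc k)
            = r ^ 2 + -(algebraMap (Polynomial k) (RatFunc k) f * s ^ 2) := by ring
        rw [heq] at hsum ⊢
        calc (r ^ 2 + -(algebraMap (Polynomial k) (RatFunc k) f * s ^ 2)).intDegree
            ≤ max (r ^ 2).intDegree
              (-(algebraMap (Polynomial k) (RatFunc k) f * s ^ 2)).intDegree :=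
              RatFunc.intDegree_add_le hy0 hsum
          _ ≤ 2 * (g : ℤ) := max_le hr2deg hydeg
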